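/- arXiv:1509.05601 — 4 statements merged into one kernel-verified Lean document; each statement's English description precedes it below -/
import Mathlib

section
/- The matrix −A₂ D^{-1} = (I − D^{-1} E (E^t D^{-1} E)^{-1} E^t) D^{-1} is symmetric positive semi-definite. -/
open Matrix

theorem neg_a2Dinv_posSemidef (m l : ℕ) (hl : 1 ≤ l) (hlm : l ≤ m)
    (E : Matrix (Fin m) (Fin l) ℝ) (hrank : E.rank = l)
    (d : Fin m → ℝ) (hd : ∀ i, 0 < d i)
    (D : Matrix (Fin m) (Fin m) ℝ) (hD : D = Matrix.diagonal d)
    (A₂ : Matrix (Fin m) (Fin m) ℝ) (hA₂ : A₂ = D⁻¹ * E * (Eᵀ * D⁻¹ * E)⁻¹ * Eᵀ - 1) :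
    (-(A₂ * D⁻¹)).PosSemidef := by
  subst hA₂
  have htriv : ∀ {p q : Type} (X : Matrix p q ℝ), Xᴴ = Xᵀ := fun X => Matrix.ext fun i j => rfl
  have hDinv : D⁻¹ = Matrix.diagonal (fun i => (d i)⁻¹) := by
    apply Matrix.inv_eq_right_inv
    rw [hD, Matrix.diagonal_mul_diagonal]
    have : (fun i => d i * (d i)⁻¹) = fun _ => (1:ℝ) :=
      funext fun i => mul_inv_cancel₀ (hd i).ne'
    rw [this, Matrix.diagonal_one]
  have hdinv_pos : ∀ i, 0 < (d i)⁻¹ := fun i => inv_pos.mpr (hd i)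
  have hDinvPD : (D⁻¹).PosDef := by rw [hDinv]; exact Matrix.PosDef.diagonal hdinv_pos
  have hDinvt : (D⁻¹)ᵀ = D⁻¹ := by rw [hDinv, Matrix.diagonal_transpose]
  have hker : ∀ x : Fin l → ℝ, E *ᵥ x = 0 → x = 0 := by
    have h1 : E.rank + Module.finrank ℝ (LinearMap.ker E.mulVecLin) = l := by
      rw [Matrix.rank, LinearMap.finrank_range_add_finrank_ker]
      simp
    rw [hrank] at h1
    have h2 : Module.finrank ℝ (LinearMap.ker E.mulVecLin) = 0 := by omega
    exact Matrix.ker_mulVecLin_eq_bot_iff.mp (Submodule.finrank_eq_zero.mp h2)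
  set S := Eᵀ * D⁻¹ * E with hS
  have hSt : Sᵀ = S := by
    rw [hS, Matrix.transpose_mul, Matrix.transpose_mul, Matrix.transpose_transpose, hDinvt,
      Matrix.mul_assoc]
  have hSpd : S.PosDef := by
    refine Matrix.PosDef.of_dotProduct_mulVec_pos (by rw [Matrix.IsHermitian, htriv, hSt]) fun x hx => ?_
    have hEx : E *ᵥ x ≠ 0 := fun h => hx (hker x h)
    have h0 := hDinvPD.dotProduct_mulVec_pos hEx
    have heq : star (E *ᵥ x) ⬝ᵥ D⁻¹ *ᵥ (E *ᵥ x) = star x ⬝ᵥ S *ᵥ x := by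
      show (E *ᵥ x) ⬝ᵥ D⁻¹ *ᵥ (E *ᵥ x) = x ⬝ᵥ S *ᵥ x
      rw [hS, Matrix.mul_assoc, ← Matrix.mulVec_mulVec, Matrix.dotProduct_mulVec x,
        Matrix.vecMul_transpose, Matrix.mulVec_mulVec]
    rw [← heq]; exact h0
  have hSdet : IsUnit S.det := Matrix.isUnit_iff_isUnit_det _ |>.mp hSpd.isUnit
  set B := Matrix.diagonal (fun i => Real.sqrt (d i)⁻¹) with hB
  have hBB : B * B = D⁻¹ := by
    rw [hB, hDinv, Matrix.diagonal_mul_diagonal]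
    have : (fun i => Real.sqrt (d i)⁻¹ * Real.sqrt (d i)⁻¹) = fun i => (d i)⁻¹ :=
      funext fun i => Real.mul_self_sqrt (hdinv_pos i).le
    rw [this]
  have hBt : Bᵀ = B := Matrix.diagonal_transpose _
  set T := S⁻¹ with hT
  have hTt : Tᵀ = T := by rw [hT, Matrix.transpose_nonsing_inv, hSt]
  set R := (1 - B * E * T * Eᵀ * B) * B with hR
  have key : -((D⁻¹ * E * T * Eᵀ - 1) * D⁻¹) = Rᵀ * R := by
    have h1' : ∀ {n : Type} [Fintype n] (X : Matrix (Fin m) n ℝ),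
        B * (B * X) = D⁻¹ * X := by
      intro n _ X; rw [← Matrix.mul_assoc, hBB]
    have hS' : ∀ {n : Type} [Fintype n] (X : Matrix (Fin l) n ℝ),
        Eᵀ * (D⁻¹ * (E * X)) = S * X := by
      intro n _ X; rw [hS]; simp [Matrix.mul_assoc]
    have h2' : ∀ {n : Type} [Fintype n] (X : Matrix (Fin l) n ℝ),
        T * (S * (T * X)) = T * X := by
      intro n _ X
      rw [← Matrix.mul_assoc, ← Matrix.mul_assoc, hT, Matrix.nonsing_inv_mul _ hSdet,
        Matrix.one_mul]
    rw [hR]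
    simp only [Matrix.transpose_mul, Matrix.transpose_sub, Matrix.transpose_one, hBt, hTt,
      Matrix.transpose_transpose, neg_sub, Matrix.sub_mul, Matrix.mul_sub, Matrix.one_mul,
      Matrix.mul_one, Matrix.mul_assoc]
    simp only [h1', hS', h2', hBB]
    rw [sub_self, sub_zero]
  rw [key]
  rw [show Rᵀ = Rᴴ from (htriv R).symm]
  exact Matrix.posSemidef_conjTranspose_mul_self R
end

section
/- The spectral (operator 2-)norm of A₁ D^{-1} satisfies ‖A₁ D^{-1}‖ ≤ 1 / λ_min(D). -/
open Matrix
open scoped Matrix.Norms.L2Operator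

-- norm bound for diagonal matrices
lemma diag_norm_le {m : ℕ} (v : Fin m → ℝ) (c : ℝ) (hc : 0 ≤ c) (h : ∀ i, |v i| ≤ c) :
    ‖(Matrix.diagonal v : Matrix (Fin m) (Fin m) ℝ)‖ ≤ c := by
  rw [Matrix.l2_opNorm_def]
  apply ContinuousLinearMap.opNorm_le_bound _ hc
  intro x
  simp only [LinearEquiv.trans_apply, LinearMap.coe_toContinuousLinearMap']
  rw [Matrix.toEuclideanLin_apply]
  rw [EuclideanSpace.norm_eq, EuclideanSpace.norm_eq]
  simp only [PiLp.toLp_apply, Matrix.mulVec_diagonal,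
    Real.norm_eq_abs]
  rw [← Real.sqrt_sq hc, ← Real.sqrt_mul (by positivity)]
  apply Real.sqrt_le_sqrt
  rw [Finset.mul_sum]
  apply Finset.sum_le_sum
  intro i _
  have hvi := h i
  have h1 : |v i * x i| = |v i| * |x i| := abs_mul _ _
  rw [h1, mul_pow]
  gcongr


-- projection norm ≤ 1
lemma proj_norm_le {m : ℕ} (P : Matrix (Fin m) (Fin m) ℝ) (hPt : Pᵀ = P) (hP2 : P * P = P) :
    ‖P‖ ≤ 1 := by
  have h := Matrix.l2_opNorm_conjTranspose_mul_self P
  have hH : Pᴴ = P := by rw [Matrix.conjTranspose_eq_transpose_of_trivial]; simpa using hPt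
  rw [hH, hP2] at h
  nlinarith [norm_nonneg P]

theorem a1Dinv_norm_le (m l : ℕ) (hl : 1 ≤ l) (hlm : l ≤ m)
    (E : Matrix (Fin m) (Fin l) ℝ) (hrank : E.rank = l)
    (d : Fin m → ℝ) (hd : ∀ i, 0 < d i)
    (D : Matrix (Fin m) (Fin m) ℝ) (hD : D = Matrix.diagonal d)
    (A₁ : Matrix (Fin m) (Fin m) ℝ) (hA₁ : A₁ = D⁻¹ * E * (Eᵀ * D⁻¹ * E)⁻¹ * Eᵀ) :
    ‖A₁ * D⁻¹‖ ≤ 1 / (⨅ i, d i) := by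
  have hm : 0 < m := lt_of_lt_of_le hl hlm
  haveI : Nonempty (Fin m) := Fin.pos_iff_nonempty.mp hm
  obtain ⟨i₀, hi₀⟩ := Finite.exists_min d
  set lam : ℝ := ⨅ i, d i with hlamdef
  have hlamle : ∀ i, lam ≤ d i := fun i => ciInf_le (Finite.bddBelow_range d) i
  have hlam : lam = d i₀ := le_antisymm (hlamle i₀) (le_ciInf hi₀)
  have hlampos : 0 < lam := hlam ▸ hd i₀
  set s : Fin m → ℝ := fun i => (Real.sqrt (d i))⁻¹ with hs
  set S : Matrix (Fin m) (Fin m) ℝ := Matrix.diagonal s with hSdef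
  have hSt : Sᵀ = S := Matrix.diagonal_transpose s
  have hss : ∀ i, s i * s i = (d i)⁻¹ := by
    intro i
    rw [hs, ← mul_inv, Real.mul_self_sqrt (hd i).le]
  have hDinv : D⁻¹ = S * S := by
    have h1 : D⁻¹ = Matrix.diagonal (fun i => (d i)⁻¹) := by
      apply Matrix.inv_eq_right_inv
      rw [hD, Matrix.diagonal_mul_diagonal]
      rw [show (fun i => d i * (d i)⁻¹) = fun _ => (1:ℝ) from funext fun i => mul_inv_cancel₀ (ne_of_gt (hd i))]
      exact Matrix.diagonal_one
    rw [h1, hSdef, Matrix.diagonal_mul_diagonal]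
    exact congrArg Matrix.diagonal (funext fun i => (hss i).symm)
  set G : Matrix (Fin l) (Fin l) ℝ := Eᵀ * D⁻¹ * E with hG
  have hG2 : G = (S * E)ᵀ * (S * E) := by
    rw [hG, hDinv, Matrix.transpose_mul, hSt]
    simp only [Matrix.mul_assoc]
  have hGsym : Gᵀ = G := by
    rw [hG2, Matrix.transpose_mul, Matrix.transpose_transpose]
  have hSdet : IsUnit S.det := by
    rw [hSdef, Matrix.det_diagonal]
    apply isUnit_iff_ne_zero.mpr
    apply Finset.prod_ne_zero_iff.mpr
    intro i _
    exact inv_ne_zero (ne_of_gt (Real.sqrt_pos.mpr (hd i)))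
  have hrankG : G.rank = l := by
    rw [hG2, Matrix.rank_transpose_mul_self, Matrix.rank_mul_eq_right_of_isUnit_det S E hSdet,
      hrank]
  have hGunit : IsUnit G := by
    rw [← Matrix.mulVec_injective_iff_isUnit]
    have hker : LinearMap.ker G.mulVecLin = ⊥ := by
      have h1 := LinearMap.finrank_range_add_finrank_ker G.mulVecLin
      rw [← Submodule.finrank_eq_zero (R := ℝ)]
      have h2 : (Module.finrank ℝ (Fin l → ℝ)) = l := by simp
      have h3 : Module.finrank ℝ (LinearMap.range G.mulVecLin) = l := hrankG
      omega
    have := LinearMap.ker_eq_bot.mp hker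
    exact this
  have hGdet : IsUnit G.det := (Matrix.isUnit_iff_isUnit_det G).mp hGunit
  have hGinvG : G⁻¹ * G = 1 := Matrix.nonsing_inv_mul G hGdet
  have hGinvsym : (G⁻¹)ᵀ = G⁻¹ := by
    rw [Matrix.transpose_nonsing_inv, hGsym]
  set P : Matrix (Fin m) (Fin m) ℝ := S * E * G⁻¹ * Eᵀ * S with hP
  have hPt : Pᵀ = P := by
    rw [hP]
    simp only [Matrix.transpose_mul, Matrix.transpose_transpose, hSt, hGinvsym]
    simp only [Matrix.mul_assoc]
  have hmid : ∀ (X : Matrix (Fin l) (Fin m) ℝ), Eᵀ * (S * (S * (E * X))) = G * X := by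
    intro X
    simp only [← Matrix.mul_assoc]
    rw [hG, hDinv]
    simp only [Matrix.mul_assoc]
  have hP2 : P * P = P := by
    rw [hP]
    simp only [Matrix.mul_assoc]
    rw [hmid (G⁻¹ * (Eᵀ * S))]
    rw [← Matrix.mul_assoc G⁻¹ G, hGinvG, Matrix.one_mul]
  have hmain : A₁ * D⁻¹ = S * (P * S) := by
    rw [hA₁, hDinv, hP]
    simp only [Matrix.mul_assoc]
  have hc : (0:ℝ) ≤ (Real.sqrt lam)⁻¹ := inv_nonneg.mpr (Real.sqrt_nonneg _)
  have hSnorm : ‖S‖ ≤ (Real.sqrt lam)⁻¹ := by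
    apply diag_norm_le s _ hc
    intro i
    rw [abs_of_nonneg (inv_nonneg.mpr (Real.sqrt_nonneg _))]
    exact inv_anti₀ (Real.sqrt_pos.mpr hlampos) (Real.sqrt_le_sqrt (hlamle i))
  have hPnorm : ‖P‖ ≤ 1 := proj_norm_le P hPt hP2
  calc ‖A₁ * D⁻¹‖ = ‖S * (P * S)‖ := by rw [hmain]
    _ ≤ ‖S‖ * ‖P * S‖ := Matrix.l2_opNorm_mul _ _
    _ ≤ ‖S‖ * (‖P‖ * ‖S‖) :=
        mul_le_mul_of_nonneg_left (Matrix.l2_opNorm_mul _ _) (norm_nonneg S)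
    _ ≤ (Real.sqrt lam)⁻¹ * (1 * (Real.sqrt lam)⁻¹) := by
        gcongr
    _ = 1 / lam := by
        rw [one_mul, ← mul_inv, Real.mul_self_sqrt hlampos.le, one_div]
end

section
/- The spectral norm of A₁ = D^{-1} E (E^t D^{-1} E)^{-1} E^t satisfies 1 ≤ ‖A₁‖ ≤ √(λ_max(D)/λ_min(D)), where λ_max(D) and λ_min(D) are the largest and smallest diagonal entries of D. -/
open Matrix
open scoped Matrix.Norms.L2Operator

/-- A matrix whose rank equals its number of columns has injective `mulVec`. -/
lemma aux_mulVec_injective_of_rank {m l : ℕ} (M : Matrix (Fin m) (Fin l) ℝ)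
    (h : M.rank = l) : Function.Injective M.mulVec := by
  have h1 := LinearMap.finrank_range_add_finrank_ker M.mulVecLin
  rw [Matrix.rank] at h
  have h2 : Module.finrank ℝ (Fin l → ℝ) = l := by simp
  have hker : Module.finrank ℝ (LinearMap.ker M.mulVecLin) = 0 := by omega
  have hbot : LinearMap.ker M.mulVecLin = ⊥ := Submodule.finrank_eq_zero.mp hker
  have := LinearMap.ker_eq_bot.mp hbot
  rwa [Matrix.coe_mulVecLin] at this

/-- An l2-operator-norm bound for diagonal matrices. -/
lemma aux_diag_norm_le {m : ℕ} (v : Fin m → ℝ) {c : ℝ} (hc : 0 ≤ c)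
    (h : ∀ i, |v i| ≤ c) :
    ‖(Matrix.diagonal v : Matrix (Fin m) (Fin m) ℝ)‖ ≤ c := by
  rw [Matrix.l2_opNorm_def]
  apply ContinuousLinearMap.opNorm_le_bound _ hc
  intro x
  set f := (Matrix.toEuclideanLin.trans LinearMap.toContinuousLinearMap)
      (Matrix.diagonal v) with hf
  have key : ∀ i, (f x) i = v i * x i := by
    intro i
    simp [hf, Matrix.toEuclideanLin_apply, Matrix.mulVec_diagonal]
  rw [EuclideanSpace.norm_eq, EuclideanSpace.norm_eq, ← Real.sqrt_sq hc,
    ← Real.sqrt_mul (sq_nonneg c)]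
  apply Real.sqrt_le_sqrt
  rw [Finset.mul_sum]
  apply Finset.sum_le_sum
  intro i _
  rw [key i, norm_mul, mul_pow]
  have hv : ‖v i‖ ≤ c := by rw [Real.norm_eq_abs]; exact h i
  exact mul_le_mul_of_nonneg_right (pow_le_pow_left₀ (norm_nonneg _) hv 2) (sq_nonneg _)

theorem a1_norm_bounds (m l : ℕ) (hl : 1 ≤ l) (hlm : l ≤ m)
    (E : Matrix (Fin m) (Fin l) ℝ) (hrank : E.rank = l)
    (d : Fin m → ℝ) (hd : ∀ i, 0 < d i)
    (D : Matrix (Fin m) (Fin m) ℝ) (hD : D = Matrix.diagonal d)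
    (A₁ : Matrix (Fin m) (Fin m) ℝ) (hA₁ : A₁ = D⁻¹ * E * (Eᵀ * D⁻¹ * E)⁻¹ * Eᵀ) :
    1 ≤ ‖A₁‖ ∧ ‖A₁‖ ≤ Real.sqrt ((⨆ i, d i) / (⨅ i, d i)) := by
  have hm : 1 ≤ m := le_trans hl hlm
  haveI : Nonempty (Fin m) := ⟨⟨0, by omega⟩⟩
  haveI : Nonempty (Fin l) := ⟨⟨0, hl⟩⟩
  -- the square root of D
  set s : Fin m → ℝ := fun i => Real.sqrt (d i) with hs
  have hs0 : ∀ i, 0 < s i := fun i => Real.sqrt_pos.mpr (hd i)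
  set S : Matrix (Fin m) (Fin m) ℝ := Matrix.diagonal s with hS
  have hdetS : IsUnit S.det := by
    rw [hS, Matrix.det_diagonal]
    exact isUnit_iff_ne_zero.mpr (Finset.prod_pos (fun i _ => hs0 i)).ne'
  have hdetD : IsUnit D.det := by
    rw [hD, Matrix.det_diagonal]
    exact isUnit_iff_ne_zero.mpr (Finset.prod_pos (fun i _ => hd i)).ne'
  have hSS : S * S = D := by
    rw [hS, hD, Matrix.diagonal_mul_diagonal]
    exact congrArg Matrix.diagonal (funext fun i => Real.mul_self_sqrt (hd i).le)
  have hSinv : S⁻¹ = Matrix.diagonal (fun i => (s i)⁻¹) := by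
    apply Matrix.inv_eq_right_inv
    rw [hS, Matrix.diagonal_mul_diagonal]
    have hone : (fun i => s i * (s i)⁻¹) = fun _ : Fin m => (1 : ℝ) :=
      funext fun i => mul_inv_cancel₀ (hs0 i).ne'
    rw [hone]
    exact Matrix.diagonal_one
  have hDinv : D⁻¹ = S⁻¹ * S⁻¹ := by rw [← hSS, Matrix.mul_inv_rev]
  have hdetSinv : IsUnit (S⁻¹).det := S.isUnit_nonsing_inv_det hdetS
  set F : Matrix (Fin m) (Fin l) ℝ := S⁻¹ * E with hF
  have hFrank : F.rank = l := by
    rw [hF, Matrix.rank_mul_eq_right_of_isUnit_det _ _ hdetSinv, hrank]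
  have hFtFrank : (Fᵀ * F).rank = l := by rw [Matrix.rank_transpose_mul_self, hFrank]
  have hFtFunit : IsUnit (Fᵀ * F).det := by
    rw [← Matrix.isUnit_iff_isUnit_det]
    exact Matrix.mulVec_injective_iff_isUnit.mp
      (aux_mulVec_injective_of_rank _ hFtFrank)
  have hST : Sᵀ = S := by rw [hS, Matrix.diagonal_transpose]
  have hSinvT : (S⁻¹)ᵀ = S⁻¹ := by rw [Matrix.transpose_nonsing_inv, hST]
  have hFt : Fᵀ = Eᵀ * S⁻¹ := by rw [hF, Matrix.transpose_mul, hSinvT]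
  have hEDE : Eᵀ * D⁻¹ * E = Fᵀ * F := by
    rw [hFt, hF, hDinv]
    simp only [Matrix.mul_assoc]
  set G : Matrix (Fin l) (Fin l) ℝ := (Fᵀ * F)⁻¹ with hG
  have hGmul : G * (Fᵀ * F) = 1 := Matrix.nonsing_inv_mul _ hFtFunit
  have hmulG : (Fᵀ * F) * G = 1 := Matrix.mul_nonsing_inv _ hFtFunit
  have hGT : Gᵀ = G := by
    rw [hG, Matrix.transpose_nonsing_inv, Matrix.transpose_mul,
      Matrix.transpose_transpose]
  set P : Matrix (Fin m) (Fin m) ℝ := F * G * Fᵀ with hP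
  have hPT : Pᵀ = P := by
    rw [hP]
    simp only [Matrix.transpose_mul, Matrix.transpose_transpose, hGT, Matrix.mul_assoc]
  have hPP : P * P = P := by
    have hre : F * G * Fᵀ * (F * G * Fᵀ) = F * G * ((Fᵀ * F) * G) * Fᵀ := by
      simp only [Matrix.mul_assoc]
    rw [hP, hre, hmulG, Matrix.mul_one]
  have hinvS : S⁻¹ * S = 1 := Matrix.nonsing_inv_mul _ hdetS
  have hA1 : A₁ = S⁻¹ * P * S := by
    rw [hA₁, hEDE, ← hG, hP, hF, hFt, hDinv]
    simp only [Matrix.mul_assoc, hinvS, Matrix.mul_one]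
  -- norm of P
  have hPnorm : ‖P‖ ≤ 1 := by
    have h1 : ‖Pᴴ * P‖ = ‖P‖ * ‖P‖ := Matrix.l2_opNorm_conjTranspose_mul_self P
    rw [Matrix.conjTranspose_eq_transpose_of_trivial, hPT, hPP] at h1
    nlinarith [norm_nonneg P, sq_nonneg (‖P‖ - 1)]
  -- sup and inf of d
  have hsup_bdd : BddAbove (Set.range d) := Finite.bddAbove_range d
  have hinf_bdd : BddBelow (Set.range d) := Finite.bddBelow_range d
  obtain ⟨i0⟩ := (inferInstance : Nonempty (Fin m))
  have hdM_pos : 0 < ⨆ i, d i := lt_of_lt_of_le (hd i0) (le_ciSup hsup_bdd i0)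
  have hdm_pos : 0 < ⨅ i, d i := by
    obtain ⟨j, hj⟩ := Finite.exists_min d
    exact lt_of_lt_of_le (hd j) (le_ciInf hj)
  have hSnorm : ‖S‖ ≤ Real.sqrt (⨆ i, d i) := by
    rw [hS]
    apply aux_diag_norm_le _ (Real.sqrt_nonneg _)
    intro i
    rw [abs_of_pos (hs0 i)]
    exact Real.sqrt_le_sqrt (le_ciSup hsup_bdd i)
  have hSinvnorm : ‖S⁻¹‖ ≤ (Real.sqrt (⨅ i, d i))⁻¹ := by
    rw [hSinv]
    apply aux_diag_norm_le _ (by positivity)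
    intro i
    rw [abs_of_pos (inv_pos.mpr (hs0 i))]
    exact inv_anti₀ (Real.sqrt_pos.mpr hdm_pos)
      (Real.sqrt_le_sqrt (ciInf_le hinf_bdd i))
  -- upper bound
  have hup : ‖A₁‖ ≤ Real.sqrt ((⨆ i, d i) / (⨅ i, d i)) := by
    have h2 : ‖A₁‖ ≤ ‖S⁻¹‖ * ‖P‖ * ‖S‖ := by
      rw [hA1]
      calc ‖S⁻¹ * P * S‖ ≤ ‖S⁻¹ * P‖ * ‖S‖ := Matrix.l2_opNorm_mul _ _
        _ ≤ ‖S⁻¹‖ * ‖P‖ * ‖S‖ :=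
          mul_le_mul_of_nonneg_right (Matrix.l2_opNorm_mul _ _) (norm_nonneg _)
    have h3 : ‖S⁻¹‖ * ‖P‖ * ‖S‖ ≤ (Real.sqrt (⨅ i, d i))⁻¹ * 1 * Real.sqrt (⨆ i, d i) :=
      mul_le_mul
        (mul_le_mul hSinvnorm hPnorm (norm_nonneg _) (by positivity))
        hSnorm (norm_nonneg _) (by positivity)
    have h4 : (Real.sqrt (⨅ i, d i))⁻¹ * 1 * Real.sqrt (⨆ i, d i)
        = Real.sqrt ((⨆ i, d i) / (⨅ i, d i)) := by
      rw [Real.sqrt_div hdM_pos.le, mul_one, inv_mul_eq_div]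
    linarith
  -- lower bound
  have hEinj : Function.Injective E.mulVec := aux_mulVec_injective_of_rank E hrank
  have hDinvinj : Function.Injective (D⁻¹).mulVec :=
    Matrix.mulVec_injective_iff_isUnit.mpr
      ((Matrix.isUnit_iff_isUnit_det _).mpr (D.isUnit_nonsing_inv_det hdetD))
  set e : Fin l → ℝ := Pi.single ⟨0, hl⟩ 1 with he
  have he0 : e ≠ 0 := by
    intro h
    have := congrFun h ⟨0, hl⟩
    simp [he] at this
  set u : Fin m → ℝ := D⁻¹ *ᵥ (E *ᵥ e) with hu
  have hu0 : u ≠ 0 := by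
    intro h
    have h1 : E *ᵥ e = 0 := by
      apply hDinvinj
      rw [Matrix.mulVec_zero]
      exact h
    apply he0
    apply hEinj
    rw [Matrix.mulVec_zero]
    exact h1
  have hdetEDE : IsUnit (Eᵀ * D⁻¹ * E).det := by rw [hEDE]; exact hFtFunit
  have hmat : D⁻¹ * E * (Eᵀ * D⁻¹ * E)⁻¹ * Eᵀ * (D⁻¹ * E) = D⁻¹ * E := by
    have h1 : (Eᵀ * D⁻¹ * E)⁻¹ * (Eᵀ * D⁻¹ * E) = 1 :=
      Matrix.nonsing_inv_mul _ hdetEDE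
    calc D⁻¹ * E * (Eᵀ * D⁻¹ * E)⁻¹ * Eᵀ * (D⁻¹ * E)
        = D⁻¹ * E * ((Eᵀ * D⁻¹ * E)⁻¹ * (Eᵀ * D⁻¹ * E)) := by
          simp only [Matrix.mul_assoc]
      _ = D⁻¹ * E := by rw [h1, Matrix.mul_one]
  have hfix : A₁ *ᵥ u = u := by
    rw [hu, hA₁]
    simp only [Matrix.mulVec_mulVec]
    rw [hmat]
  have hlow : 1 ≤ ‖A₁‖ := by
    set x : EuclideanSpace ℝ (Fin m) := (EuclideanSpace.equiv (Fin m) ℝ).symm u with hx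
    have hxnorm : 0 < ‖x‖ := by
      rw [norm_pos_iff]
      intro hxz
      apply hu0
      have := congrArg (EuclideanSpace.equiv (Fin m) ℝ) (hx ▸ hxz)
      simpa using this
    have key := Matrix.l2_opNorm_mulVec A₁ x
    have hAx : A₁ *ᵥ x = u := hfix
    rw [hAx] at key
    have hxu : ((EuclideanSpace.equiv (Fin m) ℝ).symm u : EuclideanSpace ℝ (Fin m)) = x := by
      rw [hx]
    rw [hxu] at key
    have key2 : 1 * ‖x‖ ≤ ‖A₁‖ * ‖x‖ := by rwa [one_mul]
    exact le_of_mul_le_mul_right key2 hxnorm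
  exact ⟨hlow, hup⟩
end

section
/- The spectral norm of A₀ = D^{-1} E (E^t D^{-1} E)^{-1} satisfies ‖A₀‖ ≤ (1/σ_min(E^t)) · √(λ_max(D)/λ_min(D)), where σ_min(E^t) is the smallest singular value of E^t. -/
open Matrix
open scoped Matrix.Norms.L2Operator

/-- The set of singular values of a real matrix `A`, described as the nonnegative
reals `s` such that `s ^ 2` is an eigenvalue of `A * Aᵀ`. -/
def singularValueSet {a b : ℕ} (A : Matrix (Fin a) (Fin b) ℝ) : Set ℝ :=
  {s : ℝ | 0 ≤ s ∧ ∃ v : Fin a → ℝ, v ≠ 0 ∧ (A * Aᵀ).mulVec v = (s ^ 2) • v}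

/-- Smallest singular value. -/
noncomputable def sigmaMin {a b : ℕ} (A : Matrix (Fin a) (Fin b) ℝ) : ℝ :=
  sInf (singularValueSet A)

lemma transpose_mulVec_dot {m l : ℕ} (A : Matrix (Fin m) (Fin l) ℝ)
    (u : Fin m → ℝ) (y : Fin l → ℝ) :
    (Aᵀ *ᵥ u) ⬝ᵥ y = u ⬝ᵥ (A *ᵥ y) := by
  rw [mulVec_transpose, ← dotProduct_mulVec]

lemma dot_self_nonneg {n : ℕ} (v : Fin n → ℝ) : 0 ≤ v ⬝ᵥ v :=
  Finset.sum_nonneg fun i _ => mul_self_nonneg _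

lemma inner_eq_dot {n : ℕ} (x y : EuclideanSpace ℝ (Fin n)) :
    (inner ℝ x y : ℝ) = (WithLp.equiv 2 (Fin n → ℝ) x) ⬝ᵥ (WithLp.equiv 2 (Fin n → ℝ) y) := by
  simp [PiLp.inner_apply, RCLike.inner_apply, dotProduct, WithLp.equiv_apply, mul_comm]

lemma norm_sq_eq_dot {n : ℕ} (x : EuclideanSpace ℝ (Fin n)) :
    ‖x‖ ^ 2 = (WithLp.equiv 2 (Fin n → ℝ) x) ⬝ᵥ (WithLp.equiv 2 (Fin n → ℝ) x) := by
  rw [← real_inner_self_eq_norm_sq, inner_eq_dot]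

lemma exists_rayleigh_min {m l : ℕ} (hl : 1 ≤ l) (E : Matrix (Fin m) (Fin l) ℝ)
    (hinj : Function.Injective E.mulVec) :
    ∃ μ : ℝ, 0 < μ ∧
      (∃ v : Fin l → ℝ, v ≠ 0 ∧ (Eᵀ * E) *ᵥ v = μ • v) ∧
      (∀ y : Fin l → ℝ, μ * (y ⬝ᵥ y) ≤ (E *ᵥ y) ⬝ᵥ (E *ᵥ y)) := by
  have hne : Nonempty (Fin l) := ⟨⟨0, hl⟩⟩
  haveI : Nontrivial (EuclideanSpace ℝ (Fin l)) := inferInstance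
  set G : Matrix (Fin l) (Fin l) ℝ := Eᵀ * E with hG
  have hGh : G.IsHermitian := by
    simpa [hG] using isHermitian_conjTranspose_mul_self E
  set T : EuclideanSpace ℝ (Fin l) →ₗ[ℝ] EuclideanSpace ℝ (Fin l) := toEuclideanLin G with hT
  have hTsym : T.IsSymmetric := (isHermitian_iff_isSymmetric).mp hGh
  -- dictionary : inner (T x) x = (E x') ⬝ᵥ (E x')
  have hdict : ∀ x : EuclideanSpace ℝ (Fin l),
      (inner ℝ (T x) x : ℝ) =
        (E *ᵥ (WithLp.equiv 2 (Fin l → ℝ) x)) ⬝ᵥ (E *ᵥ (WithLp.equiv 2 (Fin l → ℝ) x)) := by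
    intro x
    rw [inner_eq_dot]
    have : WithLp.equiv 2 (Fin l → ℝ) (T x) = G *ᵥ (WithLp.equiv 2 (Fin l → ℝ) x) := rfl
    rw [this, hG, ← mulVec_mulVec, transpose_mulVec_dot]
  set μ : ℝ := ⨅ x : { x : EuclideanSpace ℝ (Fin l) // x ≠ 0 },
      RCLike.re (inner ℝ (T x) (x : EuclideanSpace ℝ (Fin l)) : ℝ) / ‖(x : EuclideanSpace ℝ (Fin l))‖ ^ 2 with hμ
  have hq_nonneg : ∀ x : { x : EuclideanSpace ℝ (Fin l) // x ≠ 0 },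
      0 ≤ RCLike.re (inner ℝ (T x) (x : EuclideanSpace ℝ (Fin l)) : ℝ) / ‖(x : EuclideanSpace ℝ (Fin l))‖ ^ 2 := by
    intro x
    apply div_nonneg _ (sq_nonneg _)
    simpa [hdict] using dot_self_nonneg _
  have hbdd : BddBelow (Set.range fun x : { x : EuclideanSpace ℝ (Fin l) // x ≠ 0 } =>
      RCLike.re (inner ℝ (T x) (x : EuclideanSpace ℝ (Fin l)) : ℝ) / ‖(x : EuclideanSpace ℝ (Fin l))‖ ^ 2) :=
    ⟨0, by rintro r ⟨x, rfl⟩; exact hq_nonneg x⟩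
  have hev : Module.End.HasEigenvalue T μ := by
    exact hTsym.hasEigenvalue_iInf_of_finiteDimensional
  obtain ⟨v, hv⟩ := hev.exists_hasEigenvector
  have hvne : (WithLp.equiv 2 (Fin l → ℝ)) v ≠ 0 := by
    simpa using hv.2
  have hveig : (Eᵀ * E) *ᵥ (WithLp.equiv 2 (Fin l → ℝ) v) = μ • (WithLp.equiv 2 (Fin l → ℝ) v) := by
    have h1 := hv.apply_eq_smul
    have : WithLp.equiv 2 (Fin l → ℝ) (T v) = G *ᵥ (WithLp.equiv 2 (Fin l → ℝ) v) := rfl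
    rw [h1] at this
    rw [hG] at this
    exact this.symm
  have hmin : ∀ y : Fin l → ℝ, μ * (y ⬝ᵥ y) ≤ (E *ᵥ y) ⬝ᵥ (E *ᵥ y) := by
    intro y
    by_cases hy : y = 0
    · simp [hy]
    · set x : EuclideanSpace ℝ (Fin l) := (WithLp.equiv 2 (Fin l → ℝ)).symm y with hx
      have hxne : x ≠ 0 := by
        simp only [hx, ne_eq]
        intro h
        exact hy (by simpa using congrArg (WithLp.equiv 2 (Fin l → ℝ)) h)
      have hnpos : (0:ℝ) < ‖x‖ ^ 2 := pow_pos (norm_pos_iff.mpr hxne) 2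
      have hle : μ ≤ RCLike.re (inner ℝ (T x) x : ℝ) / ‖x‖ ^ 2 := ciInf_le hbdd ⟨x, hxne⟩
      rw [le_div_iff₀ hnpos] at hle
      have hxy : WithLp.equiv 2 (Fin l → ℝ) x = y := rfl
      have h1 := hdict x
      rw [hxy] at h1
      have h2 := norm_sq_eq_dot x
      rw [hxy] at h2
      calc μ * (y ⬝ᵥ y) = μ * ‖x‖ ^ 2 := by rw [h2]
        _ ≤ RCLike.re (inner ℝ (T x) x : ℝ) := hle
        _ = (E *ᵥ y) ⬝ᵥ (E *ᵥ y) := by simpa using h1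
  haveI : Nonempty { x : EuclideanSpace ℝ (Fin l) // x ≠ 0 } := ⟨⟨v, hv.2⟩⟩
  have hμnonneg : 0 ≤ μ := le_ciInf hq_nonneg
  have hμpos : 0 < μ := by
    rcases hμnonneg.lt_or_eq with h | h
    · exact h
    · exfalso
      rw [← h] at hveig
      simp only [zero_smul] at hveig
      have h0 : (E *ᵥ (WithLp.equiv 2 (Fin l → ℝ) v)) ⬝ᵥ (E *ᵥ (WithLp.equiv 2 (Fin l → ℝ) v)) = 0 := by
        rw [← mulVec_mulVec] at hveig
        rw [← transpose_mulVec_dot E, hveig, zero_dotProduct]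
      have hE0 : E *ᵥ (WithLp.equiv 2 (Fin l → ℝ) v) = 0 := dotProduct_self_eq_zero.mp h0
      exact hvne (hinj (by simpa using hE0))
  exact ⟨μ, hμpos, ⟨_, hvne, hveig⟩, hmin⟩

lemma inj_of_rank {m l : ℕ} (E : Matrix (Fin m) (Fin l) ℝ) (hrank : E.rank = l) :
    Function.Injective E.mulVec := by
  have h := LinearMap.finrank_range_add_finrank_ker (E.mulVecLin)
  rw [Module.finrank_fin_fun] at h
  have hr : Module.finrank ℝ (LinearMap.range E.mulVecLin) = l := hrank
  rw [hr] at h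
  have hker : Module.finrank ℝ (LinearMap.ker E.mulVecLin) = 0 := by omega
  have : LinearMap.ker E.mulVecLin = ⊥ := Submodule.finrank_eq_zero.mp hker
  have hinj := LinearMap.ker_eq_bot.mp this
  intro a b hab
  exact hinj (by simpa [Matrix.mulVecLin_apply] using hab)


theorem a0_norm_le (m l : ℕ) (hl : 1 ≤ l) (hlm : l ≤ m)
    (E : Matrix (Fin m) (Fin l) ℝ) (hrank : E.rank = l)
    (d : Fin m → ℝ) (hd : ∀ i, 0 < d i)
    (D : Matrix (Fin m) (Fin m) ℝ) (hD : D = Matrix.diagonal d)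
    (A₀ : Matrix (Fin m) (Fin l) ℝ) (hA₀ : A₀ = D⁻¹ * E * (Eᵀ * D⁻¹ * E)⁻¹) :
    ‖A₀‖ ≤ (1 / sigmaMin Eᵀ) * Real.sqrt ((⨆ i, d i) / (⨅ i, d i)) := by
  obtain ⟨μ, hμpos, ⟨v, hvne, hveig⟩, hmin⟩ := exists_rayleigh_min hl E (inj_of_rank E hrank)
  -- identify sigmaMin Eᵀ with √μ
  have hS1 : Real.sqrt μ ∈ singularValueSet Eᵀ := by
    refine ⟨Real.sqrt_nonneg μ, v, hvne, ?_⟩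
    rw [transpose_transpose, Real.sq_sqrt hμpos.le]
    exact hveig
  have hlb : ∀ s ∈ singularValueSet Eᵀ, Real.sqrt μ ≤ s := by
    rintro s ⟨hs0, w, hw, hws⟩
    rw [transpose_transpose] at hws
    have h1 : (E *ᵥ w) ⬝ᵥ (E *ᵥ w) = s ^ 2 * (w ⬝ᵥ w) := by
      rw [← transpose_mulVec_dot E, mulVec_mulVec, hws, smul_dotProduct, smul_eq_mul]
    have h2 := hmin w
    rw [h1] at h2
    have hww : 0 < w ⬝ᵥ w := by
      rcases (dot_self_nonneg w).lt_or_eq with h | h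
      · exact h
      · exact absurd (dotProduct_self_eq_zero.mp h.symm) hw
    have hμs : μ ≤ s ^ 2 := le_of_mul_le_mul_right h2 hww
    calc Real.sqrt μ ≤ Real.sqrt (s ^ 2) := Real.sqrt_le_sqrt hμs
      _ = s := by rw [Real.sqrt_sq hs0]
  have hσ : sigmaMin Eᵀ = Real.sqrt μ :=
    le_antisymm (csInf_le ⟨Real.sqrt μ, hlb⟩ hS1) (le_csInf ⟨_, hS1⟩ hlb)
  -- constants
  set a : ℝ := ⨆ i, d i with ha
  set b : ℝ := ⨅ i, d i with hb
  have hne : Nonempty (Fin m) := ⟨⟨0, lt_of_lt_of_le hl hlm⟩⟩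
  have hb_le : ∀ i, b ≤ d i := fun i => ciInf_le (Finite.bddBelow_range d) i
  have ha_ge : ∀ i, d i ≤ a := fun i => le_ciSup (Finite.bddAbove_range d) i
  have hbpos : 0 < b := by
    obtain ⟨i0, hi0⟩ := Finite.exists_min d
    exact lt_of_lt_of_le (hd i0) (le_ciInf hi0)
  have hapos : 0 < a := lt_of_lt_of_le (hd (Classical.arbitrary _)) (ha_ge _)
  -- inverse of D
  have hDinv : D⁻¹ = diagonal (fun i => (d i)⁻¹) := by
    apply inv_eq_right_inv
    rw [hD, diagonal_mul_diagonal]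
    convert diagonal_one using 2
    funext i
    exact mul_inv_cancel₀ (hd i).ne'
  have hDmv : ∀ (w : Fin m → ℝ) (i : Fin m), (D⁻¹ *ᵥ w) i = (d i)⁻¹ * w i := by
    intro w i
    rw [hDinv, mulVec_diagonal]
  -- quadratic form bounds
  have hq_nonneg : ∀ w : Fin m → ℝ, 0 ≤ w ⬝ᵥ (D⁻¹ *ᵥ w) := by
    intro w
    apply Finset.sum_nonneg
    intro i _
    rw [hDmv]
    have h2 : (0:ℝ) < (d i)⁻¹ := inv_pos.mpr (hd i)
    nlinarith [mul_self_nonneg (w i)]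
  have hq_lower : ∀ w : Fin m → ℝ, a⁻¹ * (w ⬝ᵥ w) ≤ w ⬝ᵥ (D⁻¹ *ᵥ w) := by
    intro w
    rw [dotProduct, dotProduct, Finset.mul_sum]
    apply Finset.sum_le_sum
    intro i _
    rw [hDmv]
    have h1 : a⁻¹ ≤ (d i)⁻¹ := inv_anti₀ (hd i) (ha_ge i)
    nlinarith [mul_self_nonneg (w i)]
  have hq_sq : ∀ w : Fin m → ℝ, (D⁻¹ *ᵥ w) ⬝ᵥ (D⁻¹ *ᵥ w) ≤ b⁻¹ * (w ⬝ᵥ (D⁻¹ *ᵥ w)) := by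
    intro w
    rw [dotProduct, dotProduct, Finset.mul_sum]
    apply Finset.sum_le_sum
    intro i _
    rw [hDmv]
    have h1 : (d i)⁻¹ ≤ b⁻¹ := inv_anti₀ hbpos (hb_le i)
    have h2 : (0:ℝ) < (d i)⁻¹ := inv_pos.mpr (hd i)
    nlinarith [mul_self_nonneg (w i)]
  -- B and its inverse
  set B : Matrix (Fin l) (Fin l) ℝ := Eᵀ * D⁻¹ * E with hB
  have hBdot : ∀ y : Fin l → ℝ, (B *ᵥ y) ⬝ᵥ y = (E *ᵥ y) ⬝ᵥ (D⁻¹ *ᵥ (E *ᵥ y)) := by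
    intro y
    rw [hB, ← mulVec_mulVec, ← mulVec_mulVec, transpose_mulVec_dot]
    exact dotProduct_comm _ _
  have hBinj : Function.Injective B.mulVec := by
    have hker : ∀ y, B *ᵥ y = 0 → y = 0 := by
      intro y hy
      by_contra hy0
      have h0 : (B *ᵥ y) ⬝ᵥ y = 0 := by rw [hy, zero_dotProduct]
      rw [hBdot] at h0
      have h1 := hq_lower (E *ᵥ y)
      have h2 := hmin y
      have hyy : 0 < y ⬝ᵥ y := by
        rcases (dot_self_nonneg y).lt_or_eq with h | h
        · exact h
        · exact absurd (dotProduct_self_eq_zero.mp h.symm) hy0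
      have : 0 < a⁻¹ * ((E *ᵥ y) ⬝ᵥ (E *ᵥ y)) := by
        apply mul_pos (inv_pos.mpr hapos)
        exact lt_of_lt_of_le (mul_pos hμpos hyy) h2
      linarith
    intro y1 y2 h12
    have : B *ᵥ (y1 - y2) = 0 := by
      rw [mulVec_sub, h12, sub_self]
    have := hker _ this
    exact sub_eq_zero.mp this
  have hBunit : IsUnit B.det := by
    rw [← isUnit_iff_isUnit_det]
    exact mulVec_injective_iff_isUnit.mp hBinj
  have hBB : B * B⁻¹ = 1 := mul_nonsing_inv B hBunit
  -- the key quadratic bound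
  have key : ∀ x : Fin l → ℝ, (A₀ *ᵥ x) ⬝ᵥ (A₀ *ᵥ x) ≤ (a / (b * μ)) * (x ⬝ᵥ x) := by
    intro x
    set y : Fin l → ℝ := B⁻¹ *ᵥ x with hy
    have hxy : B *ᵥ y = x := by rw [hy, mulVec_mulVec, hBB, one_mulVec]
    set w : Fin m → ℝ := E *ᵥ y with hw
    have hz : A₀ *ᵥ x = D⁻¹ *ᵥ w := by
      rw [hA₀, ← mulVec_mulVec, ← mulVec_mulVec]
    set t : ℝ := w ⬝ᵥ (D⁻¹ *ᵥ w) with htdef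
    have ht_eq : t = y ⬝ᵥ x := by
      rw [htdef, ← hBdot y, hxy, dotProduct_comm]
    have ht0 : 0 ≤ t := hq_nonneg w
    -- Cauchy-Schwarz
    have hCS : (y ⬝ᵥ x) ^ 2 ≤ (y ⬝ᵥ y) * (x ⬝ᵥ x) := by
      have := Finset.sum_mul_sq_le_sq_mul_sq Finset.univ y x
      simpa [dotProduct, sq, Finset.sum_mul, Finset.mul_sum] using this
    have hyy_le : μ * (y ⬝ᵥ y) ≤ a * t := by
      calc μ * (y ⬝ᵥ y) ≤ w ⬝ᵥ w := hmin y
        _ ≤ a * t := by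
          have := hq_lower w
          rw [htdef]
          calc w ⬝ᵥ w = a * (a⁻¹ * (w ⬝ᵥ w)) := by field_simp
            _ ≤ a * (w ⬝ᵥ (D⁻¹ *ᵥ w)) := by
              apply mul_le_mul_of_nonneg_left this hapos.le
    have ht_le : t ≤ (a / μ) * (x ⬝ᵥ x) := by
      rcases ht0.lt_or_eq with htpos | ht0'
      · have h1 : t ^ 2 ≤ (y ⬝ᵥ y) * (x ⬝ᵥ x) := by rw [ht_eq]; exact hCS
        have h2 : (y ⬝ᵥ y) ≤ (a / μ) * t := by
          rw [div_mul_eq_mul_div, le_div_iff₀ hμpos, mul_comm]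
          exact hyy_le
        have h3 : t ^ 2 ≤ ((a / μ) * t) * (x ⬝ᵥ x) := by
          apply h1.trans
          apply mul_le_mul_of_nonneg_right h2 (dot_self_nonneg x)
        have h4 : t * t ≤ t * ((a / μ) * (x ⬝ᵥ x)) := by
          calc t * t = t ^ 2 := (sq t).symm
            _ ≤ ((a / μ) * t) * (x ⬝ᵥ x) := h3
            _ = t * ((a / μ) * (x ⬝ᵥ x)) := by ring
        exact le_of_mul_le_mul_left h4 htpos
      · rw [← ht0']
        exact mul_nonneg (by positivity) (dot_self_nonneg x)
    calc (A₀ *ᵥ x) ⬝ᵥ (A₀ *ᵥ x) = (D⁻¹ *ᵥ w) ⬝ᵥ (D⁻¹ *ᵥ w) := by rw [hz]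
      _ ≤ b⁻¹ * t := hq_sq w
      _ ≤ b⁻¹ * ((a / μ) * (x ⬝ᵥ x)) := by
          apply mul_le_mul_of_nonneg_left ht_le (inv_pos.mpr hbpos).le
      _ = (a / (b * μ)) * (x ⬝ᵥ x) := by
          rw [div_eq_mul_inv, div_eq_mul_inv, mul_inv]
          ring
  -- conclude about the operator norm
  set C : ℝ := (1 / Real.sqrt μ) * Real.sqrt (a / b) with hC
  have hCnonneg : 0 ≤ C := by positivity
  have hCsq : C ^ 2 = a / (b * μ) := by
    rw [hC, mul_pow, div_pow, one_pow, Real.sq_sqrt hμpos.le,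
      Real.sq_sqrt (by positivity : (0:ℝ) ≤ a / b), div_mul_div_comm, one_mul, mul_comm μ b]
  rw [hσ, ← hC]
  rw [Matrix.l2_opNorm_def]
  apply ContinuousLinearMap.opNorm_le_bound _ hCnonneg
  intro x
  have happ : ((Matrix.toEuclideanLin.trans LinearMap.toContinuousLinearMap) A₀) x =
      (WithLp.equiv 2 (Fin m → ℝ)).symm (A₀ *ᵥ (WithLp.equiv 2 (Fin l → ℝ) x)) := rfl
  rw [happ]
  set x' : Fin l → ℝ := WithLp.equiv 2 (Fin l → ℝ) x with hx'
  have h1 : ‖(WithLp.equiv 2 (Fin m → ℝ)).symm (A₀ *ᵥ x')‖ ^ 2 = (A₀ *ᵥ x') ⬝ᵥ (A₀ *ᵥ x') := by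
    rw [norm_sq_eq_dot]
    simp
  have h2 : ‖x‖ ^ 2 = x' ⬝ᵥ x' := norm_sq_eq_dot x
  have h3 : ‖(WithLp.equiv 2 (Fin m → ℝ)).symm (A₀ *ᵥ x')‖ ^ 2 ≤ (C * ‖x‖) ^ 2 := by
    rw [h1, mul_pow, hCsq, h2]
    exact key x'
  have h4 := Real.sqrt_le_sqrt h3
  rwa [Real.sqrt_sq (norm_nonneg _), Real.sqrt_sq (by positivity)] at h4
end
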